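/- Every k-tree G has a book embedding with star-arboricity k+1: there is a cyclic ordering of V(G) and a partition of E(G) into k+1 star-forests such that no two edges of the same star-forest interleave in the cyclic order. Moreover, if G ≇ K_{k+1} this can be done so that every k-simplicial vertex has all its incident edges in pairwise distinct parts. -/

import Mathlib

namespace KTreeBookAux

theorem lex_cons_inv {a b : ℕ} {l m : List ℕ} (h : List.Lex (· < ·) (a :: l) (b :: m)) :
    a < b ∨ (a = b ∧ List.Lex (· < ·) l m) := by
  cases h with
  | cons h => exact Or.inr ⟨rfl, h⟩
  | rel h => exact Or.inl h

theorem lex_append {l t : List ℕ} (ht : t ≠ []) : List.Lex (· < ·) l (l ++ t) := by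
  induction l with
  | nil =>
    cases t with
    | nil => exact absurd rfl ht
    | cons b t' => exact List.Lex.nil
  | cons a l ih => exact List.Lex.cons ih

theorem prefix_lex {l m : List ℕ} (h : l <+: m) (hne : l ≠ m) : List.Lex (· < ·) l m := by
  obtain ⟨t, rfl⟩ := h
  apply lex_append
  rintro rfl
  exact hne (by simp)

theorem lex_singleton_iff {x y : ℕ} : List.Lex (· < ·) [x] [y] ↔ x < y := by
  constructor
  · intro h
    rcases lex_cons_inv h with h | ⟨rfl, h2⟩
    · exact h
    · exact absurd h2 (fun hh => by cases hh)
  · exact fun h => List.Lex.rel h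

theorem lex_interval {p r1 r2 r3 : List ℕ} (h1 : p <+: r1) (h3 : p <+: r3)
    (h12 : r1 = r2 ∨ List.Lex (· < ·) r1 r2) (h23 : r2 = r3 ∨ List.Lex (· < ·) r2 r3) :
    p <+: r2 := by
  induction p generalizing r1 r2 r3 with
  | nil => exact List.nil_prefix
  | cons a p ih =>
    rcases h12 with rfl | h12
    · exact h1
    rcases h23 with rfl | h23
    · exact h3
    obtain ⟨t1, rfl⟩ := h1
    obtain ⟨t3, rfl⟩ := h3
    cases r2 with
    | nil => cases h12
    | cons b r2' =>
      rcases lex_cons_inv h12 with hab | ⟨rfl, h12'⟩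
      · rcases lex_cons_inv h23 with hba | ⟨hba, _⟩
        · exact absurd (lt_trans hab hba) (lt_irrefl a)
        · exact absurd (hba ▸ hab) (lt_irrefl a)
      · rcases lex_cons_inv h23 with hba | ⟨_, h23'⟩
        · exact absurd hba (lt_irrefl a)
        · obtain ⟨t, rfl⟩ := ih ((p.prefix_append t1)) (p.prefix_append t3)
            (Or.inr h12') (Or.inr h23')
          exact ⟨t, rfl⟩

theorem prefix_snoc {l m : List ℕ} {a : ℕ} (h : l <+: m ++ [a]) :
    l = m ++ [a] ∨ l <+: m := by
  rcases Nat.lt_or_ge m.length l.length with hl | hl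
  · left
    obtain ⟨t, ht⟩ := h
    have hlen : l.length + t.length = m.length + 1 := by
      simpa using congrArg List.length ht
    have : t = [] := by
      cases t with
      | nil => rfl
      | cons x t' => simp at hlen; omega
    subst this; simpa using ht
  · right
    exact List.prefix_of_prefix_length_le h (m.prefix_append [a]) (by simpa using hl)

theorem lex_trans {l m r : List ℕ} (h1 : List.Lex (· < ·) l m)
    (h2 : List.Lex (· < ·) m r) : List.Lex (· < ·) l r := by
  have a1 : l < m := h1
  have a2 : m < r := h2
  exact lt_trans a1 a2

theorem lex_asymm {l m : List ℕ} (h : List.Lex (· < ·) l m) : ¬ List.Lex (· < ·) m l := by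
  intro h2
  have a1 : l < m := h
  have a2 : m < l := h2
  exact absurd a2 (lt_asymm a1)

theorem lex_irrefl {l : List ℕ} (h : List.Lex (· < ·) l l) : False := by
  have a1 : l < l := h
  exact lt_irrefl _ a1

/-- The set of parents (earlier neighbours) of a vertex. -/
def parA (n : ℕ) (A : Fin n → Fin n → Prop) [DecidableRel A] (j : Fin n) : Finset (Fin n) :=
  Finset.univ.filter (fun i : Fin n => A i j ∧ (i : ℕ) < (j : ℕ))

theorem mem_parA {n : ℕ} {A : Fin n → Fin n → Prop} [DecidableRel A] {j i : Fin n} :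
    i ∈ parA n A j ↔ A i j ∧ (i : ℕ) < (j : ℕ) := by
  simp [parA]

/-- Greedy proper colouring. -/
noncomputable def colA (n k : ℕ) (A : Fin n → Fin n → Prop) [DecidableRel A] (j : Fin n) : ℕ :=
  if (j : ℕ) ≤ k then (j : ℕ)
  else sInf {c : ℕ | c ∉ (parA n A j).attach.image (fun i => colA n k A i.1)}
termination_by (j : ℕ)
decreasing_by
  have := i.2
  rw [mem_parA] at this
  exact this.2

theorem colA_eq (n k : ℕ) (A : Fin n → Fin n → Prop) [DecidableRel A] (j : Fin n) :
    colA n k A j = if (j : ℕ) ≤ k then (j : ℕ)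
      else sInf {c : ℕ | c ∉ (parA n A j).image (colA n k A)} := by
  by_cases h : (j : ℕ) ≤ k
  · rw [colA, if_pos h, if_pos h]
  · rw [colA, if_neg h, if_neg h]
    congr 1
    ext c
    simp [Finset.mem_image, Subtype.exists]

/-- Ancestor path in the tree given by maximal parents. -/
def pathA (n k : ℕ) (A : Fin n → Fin n → Prop) [DecidableRel A] (j : Fin n) : List ℕ :=
  if hs : (parA n A j).Nonempty then
    (if k < (((parA n A j).max' hs : Fin n) : ℕ) then
      pathA n k A ((parA n A j).max' hs) else []) ++ [(j : ℕ)]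
  else [(j : ℕ)]
termination_by (j : ℕ)
decreasing_by
  have := Finset.max'_mem _ hs
  rw [mem_parA] at this
  exact this.2

theorem pathA_eq (n k : ℕ) (A : Fin n → Fin n → Prop) [DecidableRel A] (j : Fin n)
    (hs : (parA n A j).Nonempty) :
    pathA n k A j = (if k < (((parA n A j).max' hs : Fin n) : ℕ) then
      pathA n k A ((parA n A j).max' hs) else []) ++ [(j : ℕ)] := by
  rw [pathA, dif_pos hs]

end KTreeBookAux
namespace KTreeBookAux

theorem aux (n k : ℕ) (hk : 1 ≤ k) (hn : k + 1 ≤ n) (A : Fin n → Fin n → Prop) [DecidableRel A]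
    (hsymm : ∀ i j, A i j → A j i) (hirr : ∀ i, ¬ A i i)
    (hlow : ∀ i j : Fin n, (i : ℕ) < (j : ℕ) → (j : ℕ) ≤ k → A i j)
    (hcard : ∀ j : Fin n, k < (j : ℕ) → (parA n A j).card = k)
    (hclique : ∀ j i i' : Fin n, k < (j : ℕ) → A i j → (i : ℕ) < (j : ℕ) → A i' j →
      (i' : ℕ) < (j : ℕ) → i ≠ i' → A i i') :
    ∃ (pos : Fin n ≃ Fin n) (colE : Fin n → Fin n → ℕ),
      (∀ i j, colE i j = colE j i) ∧
      (∀ i j, A i j → colE i j ≤ k) ∧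
      (∀ (c : ℕ) (v u : Fin n), A v u → colE v u = c →
        2 ≤ {x | A v x ∧ colE v x = c}.ncard →
        {x | A u x ∧ colE u x = c}.ncard = 1) ∧
      (∀ (c : ℕ) (a b x y : Fin n), A a b → colE a b = c → A x y → colE x y = c →
        ¬ (pos a < pos x ∧ pos x < pos b ∧ pos b < pos y)) ∧
      (∀ v : Fin n, {u | A v u}.ncard = k →
        ∀ (c : ℕ) (u w : Fin n), u ≠ w → A v u → A v w → colE v u = c → colE v w = c →
          False) := by
  classical
  have col_init : ∀ j : Fin n, (j : ℕ) ≤ k → colA n k A j = (j : ℕ) := by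
    intro j hj; rw [colA_eq, if_pos hj]
  have col_img : ∀ j : Fin n, ¬ (j : ℕ) ≤ k →
      colA n k A j = sInf {c : ℕ | c ∉ (parA n A j).image (colA n k A)} := by
    intro j hj; rw [colA_eq, if_neg hj]
  have hpar_ne : ∀ j : Fin n, k < (j : ℕ) → (parA n A j).Nonempty := by
    intro j hj
    rw [← Finset.card_pos, hcard j hj]; omega
  have hQ : ∀ j : Fin n, colA n k A j ≤ k ∧
      ∀ i, A i j → (i : ℕ) < (j : ℕ) → colA n k A i ≠ colA n k A j := by
    have main : ∀ N : ℕ, ∀ j : Fin n, (j : ℕ) < N → colA n k A j ≤ k ∧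
        ∀ i, A i j → (i : ℕ) < (j : ℕ) → colA n k A i ≠ colA n k A j := by
      intro N
      induction N with
      | zero => exact fun j hj => absurd hj (Nat.not_lt_zero _)
      | succ N ih =>
        intro j hj
        by_cases hjk : (j : ℕ) ≤ k
        · refine ⟨(col_init j hjk).le.trans hjk, ?_⟩
          intro i hA hij
          rw [col_init j hjk, col_init i (le_trans (le_of_lt hij) hjk)]
          omega
        · push_neg at hjk
          have hinj : ∀ i i', i ∈ parA n A j → i' ∈ parA n A j →
              colA n k A i = colA n k A i' → i = i' := by
            intro i i' hi hi' hcc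
            by_contra hne
            rw [mem_parA] at hi hi'
            rcases lt_trichotomy (i : ℕ) (i' : ℕ) with h | h | h
            · have hA' := hclique j i i' hjk hi.1 hi.2 hi'.1 hi'.2 hne
              exact (ih i' (by omega)).2 i hA' h hcc
            · exact hne (Fin.ext h)
            · have hA' := hclique j i' i hjk hi'.1 hi'.2 hi.1 hi.2 (Ne.symm hne)
              exact (ih i (by omega)).2 i' hA' h hcc.symm
          have hcardimg : ((parA n A j).image (colA n k A)).card = k := by
            rw [Finset.card_image_of_injOn (fun x hx y hy => hinj x y hx hy), hcard j hjk]
          have hsub : (parA n A j).image (colA n k A) ⊆ Finset.range (k + 1) := by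
            intro c hc
            rw [Finset.mem_image] at hc
            obtain ⟨i, hi, rfl⟩ := hc
            rw [mem_parA] at hi
            rw [Finset.mem_range, Nat.lt_succ_iff]
            exact (ih i (by omega)).1
          have hne2 : (parA n A j).image (colA n k A) ≠ Finset.range (k + 1) := by
            intro hh
            rw [hh, Finset.card_range] at hcardimg
            omega
          obtain ⟨c0, hc0r, hc0⟩ :=
            Finset.exists_of_ssubset (Finset.ssubset_iff_subset_ne.mpr ⟨hsub, hne2⟩)
          have hSne : {c : ℕ | c ∉ (parA n A j).image (colA n k A)}.Nonempty := ⟨c0, hc0⟩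
          have hcolj := col_img j (by omega)
          have hmemS : colA n k A j ∉ (parA n A j).image (colA n k A) := by
            rw [hcolj]; exact Nat.sInf_mem hSne
          constructor
          · rw [hcolj]
            exact le_trans (Nat.sInf_le hc0) (by
              rw [Finset.mem_range, Nat.lt_succ_iff] at hc0r; exact hc0r)
          · intro i hA hij hcc
            exact hmemS (Finset.mem_image.2 ⟨i, mem_parA.2 ⟨hA, hij⟩, hcc⟩)
    exact fun j => main n j j.2
  have col_le : ∀ j : Fin n, colA n k A j ≤ k := fun j => (hQ j).1
  have hproper : ∀ i j, A i j → colA n k A i ≠ colA n k A j := by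
    intro i j hA
    rcases lt_trichotomy (i : ℕ) (j : ℕ) with h | h | h
    · exact (hQ j).2 i hA h
    · exact absurd (Fin.ext h ▸ hA) (hirr j)
    · exact Ne.symm ((hQ i).2 j (hsymm i j hA) h)
  have hUniq : ∀ (j i i' : Fin n), k < (j : ℕ) → i ∈ parA n A j → i' ∈ parA n A j →
      colA n k A i = colA n k A i' → i = i' := by
    intro j i i' hj hi hi' hcc
    by_contra hne
    rw [mem_parA] at hi hi'
    exact hproper i i' (hclique j i i' hj hi.1 hi.2 hi'.1 hi'.2 hne) hcc
  have hEx : ∀ (j : Fin n) (c : ℕ), k < (j : ℕ) → c ≤ k → c ≠ colA n k A j →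
      ∃ i, i ∈ parA n A j ∧ colA n k A i = c := by
    intro j c hj hc hcc
    have hcardimg : ((parA n A j).image (colA n k A)).card = k := by
      rw [Finset.card_image_of_injOn (fun x hx y hy => hUniq j x y hj hx hy), hcard j hj]
    have hsub : (parA n A j).image (colA n k A) ⊆ (Finset.range (k + 1)).erase (colA n k A j) := by
      intro d hd
      rw [Finset.mem_image] at hd
      obtain ⟨i, hi, rfl⟩ := hd
      rw [Finset.mem_erase, Finset.mem_range, Nat.lt_succ_iff]
      have hi' := mem_parA.1 hi
      exact ⟨(hQ j).2 i hi'.1 hi'.2, col_le i⟩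
    have hcarde : ((Finset.range (k + 1)).erase (colA n k A j)).card = k := by
      rw [Finset.card_erase_of_mem (by rw [Finset.mem_range, Nat.lt_succ_iff]; exact col_le j),
        Finset.card_range]
      omega
    have heq : (parA n A j).image (colA n k A) = (Finset.range (k + 1)).erase (colA n k A j) :=
      Finset.eq_of_subset_of_card_le hsub (by omega)
    have : c ∈ (parA n A j).image (colA n k A) := by
      rw [heq, Finset.mem_erase, Finset.mem_range, Nat.lt_succ_iff]
      exact ⟨hcc, hc⟩
    rw [Finset.mem_image] at this
    obtain ⟨i, hi, hci⟩ := this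
    exact ⟨i, hi, hci⟩
  have hFCex : ∀ (j : Fin n) (c : ℕ), ∃ i : Fin n, k < (j : ℕ) → c ≤ k → c ≠ colA n k A j →
      i ∈ parA n A j ∧ colA n k A i = c := by
    intro j c
    by_cases h : k < (j : ℕ) ∧ c ≤ k ∧ c ≠ colA n k A j
    · obtain ⟨i, hi⟩ := hEx j c h.1 h.2.1 h.2.2
      exact ⟨i, fun _ _ _ => hi⟩
    · exact ⟨j, fun h1 h2 h3 => absurd ⟨h1, h2, h3⟩ h⟩
  choose fc hfc using hFCex
  have hfc_mem : ∀ (j : Fin n) (c : ℕ), k < (j : ℕ) → c ≤ k → c ≠ colA n k A j →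
      fc j c ∈ parA n A j ∧ colA n k A (fc j c) = c := fun j c h1 h2 h3 => hfc j c h1 h2 h3
  have hfc_uniq : ∀ (j : Fin n) (c : ℕ) (i : Fin n), k < (j : ℕ) → c ≤ k → c ≠ colA n k A j →
      i ∈ parA n A j → colA n k A i = c → i = fc j c := by
    intro j c i h1 h2 h3 hi hci
    exact hUniq j i (fc j c) h1 hi (hfc_mem j c h1 h2 h3).1
      (hci.trans (hfc_mem j c h1 h2 h3).2.symm)
  have hTPex : ∀ j : Fin n, ∃ m : Fin n, k < (j : ℕ) →
      m ∈ parA n A j ∧ ∀ i ∈ parA n A j, i ≤ m := by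
    intro j
    by_cases hj : k < (j : ℕ)
    · exact ⟨(parA n A j).max' (hpar_ne j hj), fun _ =>
        ⟨Finset.max'_mem _ _, fun i hi => Finset.le_max' _ i hi⟩⟩
    · exact ⟨j, fun h => absurd h hj⟩
  choose Tpar hTpar using hTPex
  have hTpar_lt : ∀ j : Fin n, k < (j : ℕ) → (Tpar j : ℕ) < (j : ℕ) := by
    intro j hj; exact (mem_parA.1 ((hTpar j hj).1)).2
  have hPathEq : ∀ j : Fin n, k < (j : ℕ) →
      pathA n k A j = (if k < (Tpar j : ℕ) then pathA n k A (Tpar j) else []) ++ [(j : ℕ)] := by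
    intro j hj
    have hs := hpar_ne j hj
    have hmax : (parA n A j).max' hs = Tpar j := by
      apply le_antisymm
      · exact Finset.max'_le _ hs _ (fun i hi => (hTpar j hj).2 i hi)
      · exact Finset.le_max' _ _ (hTpar j hj).1
    rw [pathA_eq n k A j hs, hmax]
  have hPathShape : ∀ j : Fin n, k < (j : ℕ) → ∃ q, pathA n k A j = q ++ [(j : ℕ)] := by
    intro j hj; exact ⟨_, hPathEq j hj⟩
  have hPathMem : ∀ j : Fin n, k < (j : ℕ) → ∀ x ∈ pathA n k A j, k < x := by
    have main : ∀ N : ℕ, ∀ j : Fin n, (j : ℕ) < N → k < (j : ℕ) → ∀ x ∈ pathA n k A j, k < x := by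
      intro N
      induction N with
      | zero => exact fun j hj => absurd hj (Nat.not_lt_zero _)
      | succ N ih =>
        intro j hjN hjk x hx
        rw [hPathEq j hjk] at hx
        rcases List.mem_append.1 hx with hx | hx
        · by_cases hT : k < (Tpar j : ℕ)
          · rw [if_pos hT] at hx
            exact ih (Tpar j) (by have := hTpar_lt j hjk; omega) hT x hx
          · rw [if_neg hT] at hx; cases hx
        · rw [List.mem_singleton] at hx; omega
    exact fun j hj => main n j j.2 hj
  have hPathLast : ∀ j : Fin n, k < (j : ℕ) → (pathA n k A j).getLast? = some (j : ℕ) := by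
    intro j hj
    obtain ⟨q, hq⟩ := hPathShape j hj
    rw [hq]
    simp
  have hPathInj : ∀ i j : Fin n, k < (i : ℕ) → k < (j : ℕ) →
      pathA n k A i = pathA n k A j → i = j := by
    intro i j hi hj hij
    have h2 : some ((i : ℕ)) = some ((j : ℕ)) := by
      rw [← hPathLast i hi, hij, hPathLast j hj]
    exact Fin.ext (Option.some_injective _ h2)
  have hTel : ∀ j : Fin n, k < (j : ℕ) → ∀ u, u ∈ parA n A j → u ≠ Tpar j →
      u ∈ parA n A (Tpar j) := by
    intro j hj u hu hne
    have hu' := mem_parA.1 hu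
    have hT := mem_parA.1 (hTpar j hj).1
    rw [mem_parA]
    refine ⟨hclique j u (Tpar j) hj hu'.1 hu'.2 hT.1 hT.2 hne, ?_⟩
    have hle : u ≤ Tpar j := (hTpar j hj).2 u hu
    have h2 : u < Tpar j := lt_of_le_of_ne hle hne
    exact h2
  have hFcRec1 : ∀ j : Fin n, k < (j : ℕ) → ∀ c, c ≤ k → c ≠ colA n k A j →
      colA n k A (Tpar j) = c → fc j c = Tpar j := by
    intro j hj c hc hcc hcol
    exact (hfc_uniq j c (Tpar j) hj hc hcc (hTpar j hj).1 hcol).symm ▸ rfl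
  have hFcRec2 : ∀ j : Fin n, k < (j : ℕ) → ∀ c, c ≤ k → c ≠ colA n k A j →
      k < (Tpar j : ℕ) → colA n k A (Tpar j) ≠ c → fc j c = fc (Tpar j) c := by
    intro j hj c hc hcc hT hTc
    have h1 := hfc_mem j c hj hc hcc
    have hne : fc j c ≠ Tpar j := fun hh => hTc (hh ▸ h1.2)
    have h2 : fc j c ∈ parA n A (Tpar j) := hTel j hj (fc j c) h1.1 hne
    exact hfc_uniq (Tpar j) c (fc j c) hT hc (Ne.symm hTc) h2 h1.2
  have hFcRec0 : ∀ j : Fin n, k < (j : ℕ) → ∀ c, c ≤ k → c ≠ colA n k A j →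
      (Tpar j : ℕ) ≤ k → (fc j c : ℕ) = c := by
    intro j hj c hc hcc hT
    have h1 := hfc_mem j c hj hc hcc
    have hle2 : fc j c ≤ Tpar j := (hTpar j hj).2 _ h1.1
    have hle : (fc j c : ℕ) ≤ k := le_trans hle2 hT
    rw [← col_init (fc j c) hle]
    exact h1.2
  have hFcInit : ∀ j : Fin n, k < (j : ℕ) → ∀ c, c ≤ k → c ≠ colA n k A j →
      (fc j c : ℕ) ≤ k → (fc j c : ℕ) = c := by
    intro j hj c hc hcc hle
    rw [← col_init (fc j c) hle]
    exact (hfc_mem j c hj hc hcc).2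
  have hFcAnc : ∀ j : Fin n, k < (j : ℕ) → ∀ c, c ≤ k → c ≠ colA n k A j →
      k < (fc j c : ℕ) → pathA n k A (fc j c) <+: pathA n k A j ∧
        (pathA n k A (fc j c)).length < (pathA n k A j).length := by
    have main : ∀ N : ℕ, ∀ j : Fin n, (j : ℕ) < N → k < (j : ℕ) → ∀ c, c ≤ k →
        c ≠ colA n k A j → k < (fc j c : ℕ) →
        pathA n k A (fc j c) <+: pathA n k A j ∧
        (pathA n k A (fc j c)).length < (pathA n k A j).length := by
      intro N
      induction N with
      | zero => exact fun j hj => absurd hj (Nat.not_lt_zero _)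
      | succ N ih =>
        intro j hjN hj c hc hcc hfck
        by_cases hT : k < (Tpar j : ℕ)
        · by_cases hTc : colA n k A (Tpar j) = c
          · rw [hFcRec1 j hj c hc hcc hTc, hPathEq j hj, if_pos hT]
            exact ⟨(pathA n k A (Tpar j)).prefix_append _, by simp⟩
          · have heq := hFcRec2 j hj c hc hcc hT hTc
            rw [heq] at hfck ⊢
            have hrec := ih (Tpar j) (by have := hTpar_lt j hj; omega) hT c hc
              (Ne.symm hTc) hfck
            rw [hPathEq j hj, if_pos hT]
            exact ⟨hrec.1.trans ((pathA n k A (Tpar j)).prefix_append _),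
              lt_of_lt_of_le hrec.2 (by simp)⟩
        · have hle : (fc j c : ℕ) ≤ (Tpar j : ℕ) := (hTpar j hj).2 _ (hfc_mem j c hj hc hcc).1
          omega
    exact fun j hj => main n j j.2 hj
  have hNear : ∀ j : Fin n, k < (j : ℕ) → ∀ c, c ≤ k → c ≠ colA n k A j →
      ∀ u : Fin n, k < (u : ℕ) → colA n k A u = c → pathA n k A u <+: pathA n k A j → u ≠ j →
      k < (fc j c : ℕ) ∧ pathA n k A u <+: pathA n k A (fc j c) := by
    have main : ∀ N : ℕ, ∀ j : Fin n, (j : ℕ) < N → k < (j : ℕ) → ∀ c, c ≤ k →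
        c ≠ colA n k A j → ∀ u : Fin n, k < (u : ℕ) → colA n k A u = c →
        pathA n k A u <+: pathA n k A j → u ≠ j →
        k < (fc j c : ℕ) ∧ pathA n k A u <+: pathA n k A (fc j c) := by
      intro N
      induction N with
      | zero => exact fun j hj => absurd hj (Nat.not_lt_zero _)
      | succ N ih =>
        intro j hjN hj c hc hcc u hu hcu hpre hne
        obtain ⟨qu, hqu⟩ := hPathShape u hu
        by_cases hT : k < (Tpar j : ℕ)
        · rw [hPathEq j hj, if_pos hT] at hpre
          rcases prefix_snoc hpre with heq | hpre'
          · exfalso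
            apply hne
            apply hPathInj u j hu hj
            rw [heq, hPathEq j hj, if_pos hT]
          · by_cases hTc : colA n k A (Tpar j) = c
            · rw [hFcRec1 j hj c hc hcc hTc]
              exact ⟨hT, hpre'⟩
            · rw [hFcRec2 j hj c hc hcc hT hTc]
              have hneT : u ≠ Tpar j := fun hh => hTc (by rw [← hh]; exact hcu)
              exact ih (Tpar j) (by have := hTpar_lt j hj; omega) hT c hc
                (Ne.symm hTc) u hu hcu hpre' hneT
        · exfalso
          rw [hPathEq j hj, if_neg hT] at hpre
          rcases prefix_snoc hpre with heq | hpre'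
          · apply hne
            apply hPathInj u j hu hj
            rw [heq, hPathEq j hj, if_neg hT]
          · have h0 : pathA n k A u = [] := List.prefix_nil.mp hpre'
            rw [hqu] at h0
            simp at h0
    exact fun j hj => main n j j.2 hj
  -- the key
  have hKeyInj : Function.Injective (fun i : Fin n =>
      if (i : ℕ) ≤ k then [(i : ℕ)] else pathA n k A i) := by
    intro i j hij
    simp only at hij
    by_cases hi : (i : ℕ) ≤ k <;> by_cases hj : (j : ℕ) ≤ k
    · rw [if_pos hi, if_pos hj] at hij
      exact Fin.ext (by simpa using hij)
    · exfalso
      rw [if_pos hi, if_neg hj] at hij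
      have hmem : (i : ℕ) ∈ pathA n k A j := by rw [← hij]; exact List.mem_singleton_self _
      have := hPathMem j (by omega) _ hmem
      omega
    · exfalso
      rw [if_neg hi, if_pos hj] at hij
      have hmem : (j : ℕ) ∈ pathA n k A i := by rw [hij]; exact List.mem_singleton_self _
      have := hPathMem i (by omega) _ hmem
      omega
    · rw [if_neg hi, if_neg hj] at hij
      exact hPathInj i j (by omega) (by omega) hij
  have hInitNon : ∀ i j : Fin n, (i : ℕ) ≤ k → k < (j : ℕ) →
      List.Lex (· < ·) [(i : ℕ)] (pathA n k A j) := by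
    intro i j hi hj
    cases hpj : pathA n k A j with
    | nil =>
      exfalso
      obtain ⟨q, hq⟩ := hPathShape j hj
      rw [hpj] at hq
      simp at hq
    | cons hd tl =>
      have hhd : hd ∈ pathA n k A j := by rw [hpj]; exact List.mem_cons_self
      have := hPathMem j hj hd hhd
      exact List.Lex.rel (by omega)
  have hAncLt : ∀ u j : Fin n, k < (u : ℕ) → k < (j : ℕ) →
      pathA n k A u <+: pathA n k A j → u ≠ j →
      List.Lex (· < ·) (pathA n k A u) (pathA n k A j) := by
    intro u j hu hj hpre hne
    refine prefix_lex hpre (fun hh => hne (hPathInj u j hu hj hh))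
  obtain ⟨pos, hpos⟩ : ∃ pos : Fin n ≃ Fin n, ∀ i j : Fin n,
      pos i < pos j ↔ List.Lex (· < ·)
        (if (i : ℕ) ≤ k then [(i : ℕ)] else pathA n k A i)
        (if (j : ℕ) ≤ k then [(j : ℕ)] else pathA n k A j) := by
    have hcardS : ((Finset.univ : Finset (Fin n)).image (fun i : Fin n =>
        if (i : ℕ) ≤ k then [(i : ℕ)] else pathA n k A i)).card = n := by
      rw [Finset.card_image_of_injective _ hKeyInj, Finset.card_univ, Fintype.card_fin]
    set S := (Finset.univ : Finset (Fin n)).image (fun i : Fin n =>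
        if (i : ℕ) ≤ k then [(i : ℕ)] else pathA n k A i) with hSdef
    let e := S.orderIsoOfFin hcardS
    have hmem : ∀ i : Fin n, (if (i : ℕ) ≤ k then [(i : ℕ)] else pathA n k A i) ∈ S :=
      fun i => Finset.mem_image_of_mem _ (Finset.mem_univ i)
    have hinj : Function.Injective (fun i : Fin n =>
        e.symm ⟨if (i : ℕ) ≤ k then [(i : ℕ)] else pathA n k A i, hmem i⟩) := by
      intro i j hij
      exact hKeyInj (Subtype.ext_iff.mp (e.symm.injective hij))
    refine ⟨Equiv.ofBijective _ (Finite.injective_iff_bijective.mp hinj), ?_⟩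
    intro i j
    constructor
    · intro h
      have h2 : (⟨_, hmem i⟩ : {x // x ∈ S}) < ⟨_, hmem j⟩ := e.symm.lt_iff_lt.mp h
      exact Subtype.mk_lt_mk.mp h2
    · intro h
      exact e.symm.lt_iff_lt.mpr (Subtype.mk_lt_mk.mpr h)
  set colE : Fin n → Fin n → ℕ := fun i j => if (i : ℕ) < (j : ℕ)
      then (if (j : ℕ) ≤ k then ((i : ℕ) + (j : ℕ)) % (k + 1) else colA n k A i)
      else (if (i : ℕ) ≤ k then ((j : ℕ) + (i : ℕ)) % (k + 1) else colA n k A j)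
    with hcolEdef
  have hcolE_lt : ∀ i j : Fin n, (i : ℕ) < (j : ℕ) → colE i j =
      (if (j : ℕ) ≤ k then ((i : ℕ) + (j : ℕ)) % (k + 1) else colA n k A i) := by
    intro i j h
    simp only [hcolEdef]
    rw [if_pos h]
  have hcolE_ge : ∀ i j : Fin n, ¬ (i : ℕ) < (j : ℕ) → colE i j =
      (if (i : ℕ) ≤ k then ((j : ℕ) + (i : ℕ)) % (k + 1) else colA n k A j) := by
    intro i j h
    simp only [hcolEdef]
    rw [if_neg h]
  have hcolEsymm : ∀ i j, colE i j = colE j i := by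
    intro i j
    rcases lt_trichotomy (i : ℕ) (j : ℕ) with h | h | h
    · rw [hcolE_lt i j h, hcolE_ge j i (by omega)]
    · have e : i = j := Fin.ext h
      rw [e]
    · rw [hcolE_ge i j (by omega), hcolE_lt j i h]
  have hcolEle : ∀ i j, A i j → colE i j ≤ k := by
    intro i j hA
    by_cases h : (i : ℕ) < (j : ℕ)
    · rw [hcolE_lt i j h]
      by_cases h2 : (j : ℕ) ≤ k
      · rw [if_pos h2]
        have := Nat.mod_lt ((i : ℕ) + (j : ℕ)) (show 0 < k + 1 by omega)
        omega
      · rw [if_neg h2]; exact col_le i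
    · rw [hcolE_ge i j h]
      by_cases h2 : (i : ℕ) ≤ k
      · rw [if_pos h2]
        have := Nat.mod_lt ((j : ℕ) + (i : ℕ)) (show 0 < k + 1 by omega)
        omega
      · rw [if_neg h2]; exact col_le j
  have hStarEdge : ∀ (c : ℕ) (p q : Fin n), A p q → colE p q = c → (p : ℕ) < (q : ℕ) →
      k < (q : ℕ) → p ∈ parA n A q ∧ colA n k A p = c := by
    intro c p q hA hc hpq hq
    rw [hcolE_lt p q hpq, if_neg (by omega)] at hc
    exact ⟨mem_parA.2 ⟨hA, hpq⟩, hc⟩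
  have hMatchEdge : ∀ (c : ℕ) (p q : Fin n), colE p q = c → (p : ℕ) < (q : ℕ) →
      (q : ℕ) ≤ k → ((p : ℕ) + (q : ℕ)) % (k + 1) = c := by
    intro c p q hc hpq hq
    rw [hcolE_lt p q hpq, if_pos hq] at hc
    exact hc
  have hCanon : ∀ (c : ℕ) (p q : Fin n), A p q → colE p q = c →
      List.Lex (· < ·) (if (p : ℕ) ≤ k then [(p : ℕ)] else pathA n k A p)
        (if (q : ℕ) ≤ k then [(q : ℕ)] else pathA n k A q) → (p : ℕ) < (q : ℕ) := by
    intro c p q hA hcE hlex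
    by_cases hp : (p : ℕ) ≤ k <;> by_cases hq : (q : ℕ) ≤ k
    · rw [if_pos hp, if_pos hq] at hlex
      exact lex_singleton_iff.mp hlex
    · omega
    · exfalso
      rw [if_neg hp, if_pos hq] at hlex
      exact lex_asymm (hInitNon q p hq (by omega)) hlex
    · push_neg at hp hq
      rw [if_neg (by omega), if_neg (by omega)] at hlex
      rcases lt_trichotomy (p : ℕ) (q : ℕ) with h | h | h
      · exact h
      · exfalso
        have e : p = q := Fin.ext h
        rw [e] at hlex
        exact lex_irrefl hlex
      · exfalso
        have hc2 := hcolE_ge p q (by omega)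
        rw [if_neg (by omega)] at hc2
        have hcq : colA n k A q = c := by rw [← hc2]; exact hcE
        have hqmem : q ∈ parA n A p := mem_parA.2 ⟨hsymm p q hA, h⟩
        have hcneq : c ≠ colA n k A p := by
          rw [← hcq]; exact hproper q p (hsymm p q hA)
        have hcle : c ≤ k := by rw [← hcq]; exact col_le q
        have hqfc := hfc_uniq p c q hp hcle hcneq hqmem hcq
        have hanc := hFcAnc p hp c hcle hcneq (by rw [← hqfc]; omega)
        rw [← hqfc] at hanc
        have h1 : pathA n k A q ≠ pathA n k A p := by
          intro hh; rw [hh] at hanc; omega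
        exact lex_asymm (prefix_lex hanc.1 h1) hlex
  have hLeaf : ∀ (c : ℕ) (x : Fin n), colA n k A x ≠ c →
      {y | A x y ∧ colE x y = c}.Subsingleton := by
    intro c x hcx y hy y' hy'
    simp only [Set.mem_setOf_eq] at hy hy'
    by_cases hx : (x : ℕ) ≤ k
    · have hchar : ∀ z : Fin n, A x z → colE x z = c →
          (z : ℕ) ≤ k ∧ ((x : ℕ) + (z : ℕ)) % (k + 1) = c := by
        intro z hAz hcz
        rcases lt_trichotomy (x : ℕ) (z : ℕ) with h | h | h
        · rw [hcolE_lt x z h] at hcz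
          by_cases h2 : (z : ℕ) ≤ k
          · rw [if_pos h2] at hcz; exact ⟨h2, hcz⟩
          · rw [if_neg h2] at hcz
            exact absurd hcz hcx
        · exact absurd (show A x x from (Fin.ext h) ▸ hAz) (hirr x)
        · rw [hcolE_ge x z (by omega), if_pos hx] at hcz
          refine ⟨by omega, ?_⟩
          rw [Nat.add_comm]
          exact hcz
      obtain ⟨h1, h2⟩ := hchar y hy.1 hy.2
      obtain ⟨h1', h2'⟩ := hchar y' hy'.1 hy'.2
      apply Fin.ext
      have heq2 : ((x : ℕ) + (y : ℕ)) % (k + 1) = ((x : ℕ) + (y' : ℕ)) % (k + 1) := by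
        rw [h2, h2']
      have hmodeq := Nat.ModEq.add_left_cancel' (x : ℕ) heq2
      rwa [Nat.ModEq, Nat.mod_eq_of_lt (by omega), Nat.mod_eq_of_lt (by omega)] at hmodeq
    · push_neg at hx
      have hcc : c ≠ colA n k A x := Ne.symm hcx
      have hchar : ∀ z : Fin n, A x z → colE x z = c → z = fc x c := by
        intro z hAz hcz
        rcases lt_trichotomy (x : ℕ) (z : ℕ) with h | h | h
        · rw [hcolE_lt x z h] at hcz
          by_cases h2 : (z : ℕ) ≤ k
          · omega
          · rw [if_neg h2] at hcz
            exact absurd hcz hcx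
        · exact absurd (show A x x from (Fin.ext h) ▸ hAz) (hirr x)
        · rw [hcolE_ge x z (by omega), if_neg (by omega)] at hcz
          have hcle : c ≤ k := by rw [← hcz]; exact col_le z
          exact hfc_uniq x c z hx hcle hcc (mem_parA.2 ⟨hsymm x z hAz, h⟩) hcz
      rw [hchar y hy.1 hy.2, hchar y' hy'.1 hy'.2]
  refine ⟨pos, colE, hcolEsymm, hcolEle, ?_, ?_, ?_⟩
  · -- star forest
    intro c v u hAvu hcvu h2
    by_cases hcv : colA n k A v = c
    · have hcu : colA n k A u ≠ c := by
        rw [← hcv]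
        exact hproper u v (hsymm v u hAvu)
      have hss := hLeaf c u hcu
      have hvmem : v ∈ {x | A u x ∧ colE u x = c} := by
        refine ⟨hsymm v u hAvu, ?_⟩
        rw [hcolEsymm u v]
        exact hcvu
      have heq : {x | A u x ∧ colE u x = c} = {v} :=
        Set.eq_singleton_iff_unique_mem.2 ⟨hvmem, fun y hy => hss hy hvmem⟩
      rw [heq, Set.ncard_singleton]
    · exfalso
      have hss := hLeaf c v hcv
      have h3 : 1 < {x | A v x ∧ colE v x = c}.ncard := by omega
      obtain ⟨a, ha, b, hb, hab⟩ := (Set.one_lt_ncard (Set.toFinite _)).1 h3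
      exact hab (hss ha hb)
  · -- noncrossing
    intro c a b x y hab hcab hxy hcxy
    rintro ⟨h1, h2, h3⟩
    rw [hpos] at h1 h2 h3
    have hoab : (a : ℕ) < (b : ℕ) := hCanon c a b hab hcab (lex_trans h1 h2)
    have hoxy : (x : ℕ) < (y : ℕ) := hCanon c x y hxy hcxy (lex_trans h2 h3)
    by_cases hbk : (b : ℕ) ≤ k
    · have hxk : (x : ℕ) ≤ k := by
        by_contra hxk
        push_neg at hxk
        have hbx := hInitNon b x hbk hxk
        rw [if_neg (by omega), if_pos hbk] at h2
        exact lex_asymm hbx h2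
      have hak : (a : ℕ) ≤ k := by omega
      have hm1 : ((a : ℕ) + (b : ℕ)) % (k + 1) = c := hMatchEdge c a b hcab hoab hbk
      rw [if_pos hxk, if_pos hbk] at h2
      have hxb : (x : ℕ) < (b : ℕ) := lex_singleton_iff.mp h2
      rw [if_pos hak, if_pos hxk] at h1
      have hax : (a : ℕ) < (x : ℕ) := lex_singleton_iff.mp h1
      by_cases hyk : (y : ℕ) ≤ k
      · rw [if_pos hbk, if_pos hyk] at h3
        have hby : (b : ℕ) < (y : ℕ) := lex_singleton_iff.mp h3
        have hm2 := hMatchEdge c x y hcxy hoxy hyk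
        have hdvd : (k + 1) ∣ ((x : ℕ) + (y : ℕ)) - ((a : ℕ) + (b : ℕ)) := by
          apply (Nat.modEq_iff_dvd' (by omega)).1
          exact (hm1.trans hm2.symm : Nat.ModEq (k + 1) _ _)
        obtain ⟨d, hd⟩ := hdvd
        have h5 : ((x : ℕ) + (y : ℕ)) - ((a : ℕ) + (b : ℕ)) = 0 ∨
            k + 1 ≤ ((x : ℕ) + (y : ℕ)) - ((a : ℕ) + (b : ℕ)) := by
          rcases Nat.eq_zero_or_pos d with rfl | hdpos
          · left; rw [hd]; simp
          · right; rw [hd]; exact Nat.le_mul_of_pos_right _ hdpos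
        omega
      · push_neg at hyk
        have hst := hcolE_lt x y hoxy
        rw [if_neg (by omega)] at hst
        have hcx : colA n k A x = c := by rw [← hst]; exact hcxy
        have hxc : (x : ℕ) = c := by rw [← col_init x hxk]; exact hcx
        have hdvd : (k + 1) ∣ ((a : ℕ) + (b : ℕ)) - c := by
          apply (Nat.modEq_iff_dvd' (by omega)).1
          show c % (k + 1) = ((a : ℕ) + (b : ℕ)) % (k + 1)
          rw [Nat.mod_eq_of_lt (by omega), hm1]
        obtain ⟨d, hd⟩ := hdvd
        have h5 : ((a : ℕ) + (b : ℕ)) - c = 0 ∨ k + 1 ≤ ((a : ℕ) + (b : ℕ)) - c := by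
          rcases Nat.eq_zero_or_pos d with rfl | hdpos
          · left; rw [hd]; simp
          · right; rw [hd]; exact Nat.le_mul_of_pos_right _ hdpos
        omega
    · push_neg at hbk
      have hyk : k < (y : ℕ) := by
        by_contra hyk2
        push_neg at hyk2
        have hby := hInitNon y b hyk2 hbk
        rw [if_neg (by omega), if_pos hyk2] at h3
        exact lex_asymm hby h3
      have hse1 := hStarEdge c a b hab hcab hoab hbk
      have hse2 := hStarEdge c x y hxy hcxy hoxy hyk
      have hcle : c ≤ k := by rw [← hse1.2]; exact col_le a
      have hxk : k < (x : ℕ) := by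
        by_contra hxk2
        push_neg at hxk2
        have hxc : (x : ℕ) = c := by rw [← col_init x hxk2]; exact hse2.2
        by_cases hak : (a : ℕ) ≤ k
        · have hac : (a : ℕ) = c := by rw [← col_init a hak]; exact hse1.2
          rw [if_pos hak, if_pos hxk2] at h1
          have := lex_singleton_iff.mp h1
          omega
        · push_neg at hak
          have h4 := hInitNon x a hxk2 hak
          rw [if_neg (by omega), if_pos hxk2] at h1
          exact lex_asymm h4 h1
      have hcny : c ≠ colA n k A y := by
        rw [← hse2.2]; exact hproper x y hxy
      have hxfc := hfc_uniq y c x hyk hcle hcny hse2.1 hse2.2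
      have hancxy := hFcAnc y hyk c hcle hcny (by rw [← hxfc]; exact hxk)
      rw [← hxfc] at hancxy
      rw [if_neg (by omega), if_neg (by omega)] at h2
      rw [if_neg (by omega), if_neg (by omega)] at h3
      have hpre : pathA n k A x <+: pathA n k A b :=
        lex_interval (List.prefix_refl _) hancxy.1 (Or.inr h2) (Or.inr h3)
      have hneb : x ≠ b := by
        intro hh
        rw [hh] at h2
        exact lex_irrefl h2
      have hcnb : c ≠ colA n k A b := by
        rw [← hse1.2]; exact hproper a b hab
      have hnear := hNear b hbk c hcle hcnb x hxk hse2.2 hpre hneb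
      have hafc := hfc_uniq b c a hbk hcle hcnb hse1.1 hse1.2
      rw [← hafc] at hnear
      rw [if_neg (by have := hnear.1; omega), if_neg (by omega)] at h1
      by_cases hxa : pathA n k A x = pathA n k A a
      · have he : x = a := hPathInj x a hxk hnear.1 hxa
        rw [he] at h1
        exact lex_irrefl h1
      · exact lex_asymm (prefix_lex hnear.2 hxa) h1
  · -- colourful
    intro v hv c u w huw hAu hAw hcu hcw
    by_cases hcv : colA n k A v = c
    · by_cases hvk : k < (v : ℕ)
      · have hPsub : {i : Fin n | A i v ∧ (i : ℕ) < (v : ℕ)} ⊆ {u | A v u} :=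
          fun i hi => hsymm i v hi.1
        have hPcard : {i : Fin n | A i v ∧ (i : ℕ) < (v : ℕ)}.ncard = k := by
          have hco : {i : Fin n | A i v ∧ (i : ℕ) < (v : ℕ)} = ↑(parA n A v) := by
            ext i; simp [parA]
          rw [hco, Set.ncard_coe_finset, hcard v hvk]
        have hEq : {i : Fin n | A i v ∧ (i : ℕ) < (v : ℕ)} = {u | A v u} :=
          Set.eq_of_subset_of_ncard_le hPsub (by rw [hv, hPcard]) (Set.toFinite _)
        have hu2 : u ∈ {i : Fin n | A i v ∧ (i : ℕ) < (v : ℕ)} := by rw [hEq]; exact hAu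
        have hcu2 : colA n k A u = c := by
          have hg := hcolE_ge v u (by have := hu2.2; omega)
          rw [if_neg (by omega)] at hg
          rw [← hg]
          exact hcu
        exact hproper u v hu2.1 (by rw [hcu2, hcv])
      · push_neg at hvk
        have hIsub : {i : Fin n | (i : ℕ) ≤ k ∧ i ≠ v} ⊆ {u | A v u} := by
          intro i hi
          rcases lt_trichotomy (i : ℕ) (v : ℕ) with h | h | h
          · exact hsymm i v (hlow i v h hvk)
          · exact absurd (Fin.ext h) hi.2
          · exact hlow v i h hi.1
        have hIcard : {i : Fin n | (i : ℕ) ≤ k ∧ i ≠ v}.ncard = k := by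
          have hfin : (Finset.univ.filter (fun i : Fin n => (i : ℕ) ≤ k)) =
              (Finset.univ : Finset (Fin (k + 1))).image (Fin.castLE hn) := by
            ext i
            simp only [Finset.mem_filter, Finset.mem_univ, true_and, Finset.mem_image]
            constructor
            · intro hi
              exact ⟨⟨(i : ℕ), by omega⟩, Fin.ext rfl⟩
            · rintro ⟨a, rfl⟩
              have h2 := a.2
              simp only [Fin.coe_castLE]
              omega
          have hc1 : (Finset.univ.filter (fun i : Fin n => (i : ℕ) ≤ k)).card = k + 1 := by
            rw [hfin, Finset.card_image_of_injective _ (Fin.castLE_injective hn),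
              Finset.card_univ, Fintype.card_fin]
          have hco : {i : Fin n | (i : ℕ) ≤ k ∧ i ≠ v} =
              ↑((Finset.univ.filter (fun i : Fin n => (i : ℕ) ≤ k)).erase v) := by
            ext i
            simp only [Set.mem_setOf_eq, Finset.coe_erase, Set.mem_diff,
              Finset.coe_filter, Set.mem_setOf_eq, Finset.mem_coe, Finset.mem_filter,
              Finset.mem_univ, true_and, Set.mem_singleton_iff]
          have hvmem2 : v ∈ Finset.univ.filter (fun i : Fin n => (i : ℕ) ≤ k) := by
            simp only [Finset.mem_filter, Finset.mem_univ, true_and]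
            exact hvk
          rw [hco, Set.ncard_coe_finset, Finset.card_erase_of_mem hvmem2, hc1]
          omega
        have hEq : {i : Fin n | (i : ℕ) ≤ k ∧ i ≠ v} = {u | A v u} :=
          Set.eq_of_subset_of_ncard_le hIsub (by rw [hv, hIcard]) (Set.toFinite _)
        have hu2 : u ∈ {i : Fin n | (i : ℕ) ≤ k ∧ i ≠ v} := by rw [hEq]; exact hAu
        have hw2 : w ∈ {i : Fin n | (i : ℕ) ≤ k ∧ i ≠ v} := by rw [hEq]; exact hAw
        have hmod : ∀ z : Fin n, (z : ℕ) ≤ k → z ≠ v → A v z → colE v z = c →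
            ((v : ℕ) + (z : ℕ)) % (k + 1) = c := by
          intro z hz hzv hAz hcz
          rcases lt_trichotomy (v : ℕ) (z : ℕ) with h | h | h
          · rw [hcolE_lt v z h, if_pos hz] at hcz
            exact hcz
          · exact absurd (Fin.ext h).symm hzv
          · rw [hcolE_ge v z (by omega), if_pos hvk] at hcz
            rw [Nat.add_comm]
            exact hcz
        have h1 := hmod u hu2.1 hu2.2 hAu hcu
        have h2 := hmod w hw2.1 hw2.2 hAw hcw
        apply huw
        apply Fin.ext
        have hu3 := hu2.1
        have hw3 := hw2.1
        have heq2 : ((v : ℕ) + (u : ℕ)) % (k + 1) = ((v : ℕ) + (w : ℕ)) % (k + 1) := by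
          rw [h1, h2]
        have hmodeq := Nat.ModEq.add_left_cancel' (v : ℕ) heq2
        rwa [Nat.ModEq, Nat.mod_eq_of_lt (by omega), Nat.mod_eq_of_lt (by omega)] at hmodeq
    · have hss := hLeaf c v hcv
      exact huw (hss ⟨hAu, hcu⟩ ⟨hAw, hcw⟩)

end KTreeBookAux
/-- A `k`-tree, defined via a construction ordering: the first `k+1` vertices form a
clique, and each later vertex's neighbourhood among earlier vertices is a `k`-clique. -/
def IsKTree {V : Type*} [Finite V] (k : ℕ) (G : SimpleGraph V) : Prop :=
  k + 1 ≤ Nat.card V ∧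
  ∃ σ : Fin (Nat.card V) ≃ V,
    ∀ i : Fin (Nat.card V),
      (((i : ℕ) ≤ k) →
        {u | G.Adj (σ i) u ∧ ((σ.symm u : Fin (Nat.card V)) : ℕ) < (i : ℕ)} =
          {u | ((σ.symm u : Fin (Nat.card V)) : ℕ) < (i : ℕ)}) ∧
      (k < (i : ℕ) →
        ({u | G.Adj (σ i) u ∧ ((σ.symm u : Fin (Nat.card V)) : ℕ) < (i : ℕ)}.ncard = k ∧
          G.IsClique {u | G.Adj (σ i) u ∧ ((σ.symm u : Fin (Nat.card V)) : ℕ) < (i : ℕ)}))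

/-- A vertex is `k`-simplicial if its neighbourhood is a clique on exactly `k` vertices. -/
def IsKSimplicial {V : Type*} (G : SimpleGraph V) (k : ℕ) (v : V) : Prop :=
  G.IsClique (G.neighborSet v) ∧ (G.neighborSet v).ncard = k

/-- A star forest: every vertex of degree at least 2 has only degree-1 neighbours,
so every connected component is a star. -/
def IsStarForest {V : Type*} (H : SimpleGraph V) : Prop :=
  ∀ v, 2 ≤ (H.neighborSet v).ncard → ∀ u, H.Adj v u → (H.neighborSet u).ncard = 1

/-- The edge set of `G` can be partitioned into `t` star forests. -/
def HasStarArboricityAtMost {V : Type*} (t : ℕ) (G : SimpleGraph V) : Prop :=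
  ∃ H : Fin t → SimpleGraph V, (∀ i, IsStarForest (H i)) ∧ (∀ i, H i ≤ G) ∧
    ∀ u v, G.Adj u v → ∃! i, (H i).Adj u v

/-- Every `k`-tree has a book embedding with star-arboricity `k+1`: a circular vertex
ordering and a partition of the edges into `k+1` star forests, each noncrossing with
respect to the ordering; moreover if `G ≄ K_{k+1}` then every `k`-simplicial vertex is
colourful. -/
theorem ktree_book_star_arboricity {V : Type*} [Finite V] (k : ℕ) (hk : 1 ≤ k)
    (G : SimpleGraph V) (h : IsKTree k G) :
    ∃ (σ : V ≃ Fin (Nat.card V)) (H : Fin (k + 1) → SimpleGraph V),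
      (∀ i, IsStarForest (H i)) ∧ (∀ i, H i ≤ G) ∧
      (∀ u v, G.Adj u v → ∃! i, (H i).Adj u v) ∧
      (∀ i, ∀ a b x y, (H i).Adj a b → (H i).Adj x y →
        ¬ (σ a < σ x ∧ σ x < σ b ∧ σ b < σ y)) ∧
      (IsEmpty (G ≃g (⊤ : SimpleGraph (Fin (k + 1)))) →
        ∀ v, IsKSimplicial G k v →
          ∀ i, ∀ u w, u ≠ w → (H i).Adj v u → ¬ (H i).Adj v w) := by
  classical
  obtain ⟨hn, σ₀, hσ⟩ := h
  let A : Fin (Nat.card V) → Fin (Nat.card V) → Prop := fun i j => G.Adj (σ₀ i) (σ₀ j)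
  haveI : DecidableRel A := fun i j => Classical.dec _
  have hsymm : ∀ i j, A i j → A j i := fun i j hij => hij.symm
  have hirr : ∀ i, ¬ A i i := fun i => G.loopless.irrefl _
  have hAiff : ∀ u v : V, G.Adj u v ↔ A (σ₀.symm u) (σ₀.symm v) := by
    intro u v
    simp only [A, Equiv.apply_symm_apply]
  have hset : ∀ j : Fin (Nat.card V),
      {u : V | G.Adj (σ₀ j) u ∧ ((σ₀.symm u : Fin (Nat.card V)) : ℕ) < (j : ℕ)} =
        σ₀ '' {i : Fin (Nat.card V) | A i j ∧ (i : ℕ) < (j : ℕ)} := by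
    intro j
    ext u
    simp only [Set.mem_setOf_eq, Set.mem_image]
    constructor
    · rintro ⟨h1, h2⟩
      refine ⟨σ₀.symm u, ⟨?_, h2⟩, Equiv.apply_symm_apply σ₀ u⟩
      show G.Adj (σ₀ (σ₀.symm u)) (σ₀ j)
      rw [Equiv.apply_symm_apply]
      exact h1.symm
    · rintro ⟨i, ⟨h1, h2⟩, rfl⟩
      refine ⟨h1.symm, ?_⟩
      rw [Equiv.symm_apply_apply]
      exact h2
  have hlow : ∀ i j : Fin (Nat.card V), (i : ℕ) < (j : ℕ) → (j : ℕ) ≤ k → A i j := by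
    intro i j hij hjk
    have h1 := (hσ j).1 hjk
    have h2 : σ₀ i ∈ {u : V | ((σ₀.symm u : Fin (Nat.card V)) : ℕ) < (j : ℕ)} := by
      simp only [Set.mem_setOf_eq, Equiv.symm_apply_apply]
      exact hij
    rw [← h1] at h2
    exact h2.1.symm
  have hcard : ∀ j : Fin (Nat.card V), k < (j : ℕ) → (KTreeBookAux.parA (Nat.card V) A j).card = k := by
    intro j hj
    have h1 := ((hσ j).2 hj).1
    rw [hset j, Set.ncard_image_of_injective _ σ₀.injective] at h1
    rw [← h1, ← Set.ncard_coe_finset]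
    congr 1
    ext i
    simp [KTreeBookAux.parA]
  have hclique : ∀ j i i' : Fin (Nat.card V), k < (j : ℕ) → A i j → (i : ℕ) < (j : ℕ) →
      A i' j → (i' : ℕ) < (j : ℕ) → i ≠ i' → A i i' := by
    intro j i i' hj h1 h2 h3 h4 hne
    have hcl := ((hσ j).2 hj).2
    have m1 : σ₀ i ∈ {u : V | G.Adj (σ₀ j) u ∧
        ((σ₀.symm u : Fin (Nat.card V)) : ℕ) < (j : ℕ)} := by
      refine ⟨h1.symm, ?_⟩
      rw [Equiv.symm_apply_apply]
      exact h2
    have m2 : σ₀ i' ∈ {u : V | G.Adj (σ₀ j) u ∧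
        ((σ₀.symm u : Fin (Nat.card V)) : ℕ) < (j : ℕ)} := by
      refine ⟨h3.symm, ?_⟩
      rw [Equiv.symm_apply_apply]
      exact h4
    exact hcl m1 m2 (fun hh => hne (σ₀.injective hh))
  obtain ⟨pos, colE, hsym, hle, hSF, hNC, hCF⟩ :=
    KTreeBookAux.aux (Nat.card V) k hk hn A hsymm hirr hlow hcard hclique
  refine ⟨σ₀.symm.trans pos, fun c =>
    { Adj := fun u v => G.Adj u v ∧ colE (σ₀.symm u) (σ₀.symm v) = (c : ℕ)
      symm := by
        refine ⟨fun u v hv => ?_⟩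
        refine ⟨hv.1.symm, ?_⟩
        rw [hsym]
        exact hv.2
      loopless := ⟨fun v hv => G.loopless.irrefl v hv.1⟩ }, ?_, ?_, ?_, ?_, ?_⟩
  · -- star forests
    intro c
    have hNS : ∀ w : V, ∀ z : V, (G.Adj w z ∧ colE (σ₀.symm w) (σ₀.symm z) = (c : ℕ)) ↔
        z ∈ σ₀ '' {x | A (σ₀.symm w) x ∧ colE (σ₀.symm w) x = (c : ℕ)} := by
      intro w z
      simp only [Set.mem_image, Set.mem_setOf_eq]
      constructor
      · rintro ⟨h1, h2⟩
        exact ⟨σ₀.symm z, ⟨(hAiff w z).1 h1, h2⟩, Equiv.apply_symm_apply σ₀ z⟩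
      · rintro ⟨x, ⟨h1, h2⟩, rfl⟩
        refine ⟨?_, ?_⟩
        · have := (hAiff w (σ₀ x)).2
          rw [Equiv.symm_apply_apply] at this
          exact this h1
        · rw [Equiv.symm_apply_apply]
          exact h2
    have hNSet : ∀ w : V, {z : V | G.Adj w z ∧ colE (σ₀.symm w) (σ₀.symm z) = (c : ℕ)} =
        σ₀ '' {x | A (σ₀.symm w) x ∧ colE (σ₀.symm w) x = (c : ℕ)} := by
      intro w
      ext z
      exact hNS w z
    intro v hdeg u hadj
    have hdeg' : 2 ≤ ({z : V | G.Adj v z ∧ colE (σ₀.symm v) (σ₀.symm z) = (c : ℕ)}).ncard :=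
      hdeg
    rw [hNSet v, Set.ncard_image_of_injective _ σ₀.injective] at hdeg'
    show ({z : V | G.Adj u z ∧ colE (σ₀.symm u) (σ₀.symm z) = (c : ℕ)}).ncard = 1
    rw [hNSet u, Set.ncard_image_of_injective _ σ₀.injective]
    exact hSF (c : ℕ) (σ₀.symm v) (σ₀.symm u) ((hAiff v u).1 hadj.1) hadj.2 hdeg'
  · exact fun c u v hv => hv.1
  · -- partition
    intro u v hadj
    have hA : A (σ₀.symm u) (σ₀.symm v) := (hAiff u v).1 hadj
    refine ⟨⟨colE (σ₀.symm u) (σ₀.symm v), Nat.lt_succ_of_le (hle _ _ hA)⟩,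
      ⟨hadj, rfl⟩, ?_⟩
    rintro c' ⟨h1, h2⟩
    exact Fin.ext h2.symm
  · -- noncrossing
    intro c a b x y h1 h2
    rintro ⟨p1, p2, p3⟩
    exact hNC (c : ℕ) (σ₀.symm a) (σ₀.symm b) (σ₀.symm x) (σ₀.symm y)
      ((hAiff a b).1 h1.1) h1.2 ((hAiff x y).1 h2.1) h2.2 ⟨p1, p2, p3⟩
  · -- colourful
    intro _ v hsimp c u w hne h1 h2
    have hNbr : G.neighborSet v = σ₀ '' {x | A (σ₀.symm v) x} := by
      ext z
      simp only [SimpleGraph.mem_neighborSet, Set.mem_image, Set.mem_setOf_eq]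
      constructor
      · intro hz
        exact ⟨σ₀.symm z, (hAiff v z).1 hz, Equiv.apply_symm_apply σ₀ z⟩
      · rintro ⟨x, hx, rfl⟩
        have := (hAiff v (σ₀ x)).2
        rw [Equiv.symm_apply_apply] at this
        exact this hx
    have hvcard : {x | A (σ₀.symm v) x}.ncard = k := by
      rw [← Set.ncard_image_of_injective _ σ₀.injective, ← hNbr]
      exact hsimp.2
    exact hCF (σ₀.symm v) hvcard (c : ℕ) (σ₀.symm u) (σ₀.symm w)
      (fun hh => hne (by simpa using congrArg σ₀ hh))
      ((hAiff v u).1 h1.1) ((hAiff v w).1 h2.1) h1.2 h2.2
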